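/- arXiv:1401.5017 — 2 statements merged into one kernel-verified Lean document; each statement's English description precedes it below -/
import Mathlib

section
/- Let X be a metric space, let N ≥ 2, and let K_1, …, K_N be nonempty, pairwise disjoint compact subsets of X. Let δ := min over pairs i < j of dist(K_i, K_j), and assume δ > 0. For each ℓ let U_ℓ := {x ∈ X : dist(x, K_ℓ) < δ/10}. Let L ≥ 0 and M ≥ 0, and let f : K_1 ∪ ⋯ ∪ K_N → ℝ be an L-Lipschitz function with |f(x)| ≤ M for all x in its domain. For each ℓ let c_ℓ denote the Lipschitz constant of the restriction f|_{K_ℓ}. Then there exists a function f̂ : X → ℝ such that: (i) f̂ = f on K_1 ∪ ⋯ ∪ K_N; (ii) f̂ is 2L-Lipschitz on X; (iii) |f̂(x)| ≤ 2M for all x ∈ X; and (iv) for each ℓ, the restriction f̂|_{U_ℓ} is c_ℓ-Lipschitz. -/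
open Metric

/-- Clamping a real number to `[lo, hi]` is 1-Lipschitz. -/
lemma clamp_lipschitz (lo hi a b : ℝ) :
    |max lo (min a hi) - max lo (min b hi)| ≤ |a - b| := by
  have h1 : |max lo (min a hi) - max lo (min b hi)| ≤ max |lo - lo| |min a hi - min b hi| :=
    abs_max_sub_max_le_max lo (min a hi) lo (min b hi)
  have h2 : |min a hi - min b hi| ≤ max |a - b| |hi - hi| :=
    abs_min_sub_min_le_max a hi b hi
  simp only [sub_self, abs_zero] at h1 h2
  calc |max lo (min a hi) - max lo (min b hi)|
      ≤ max 0 |min a hi - min b hi| := h1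
    _ = |min a hi - min b hi| := max_eq_right (abs_nonneg _)
    _ ≤ max |a - b| 0 := h2
    _ = |a - b| := max_eq_left (abs_nonneg _)

/-- Lipschitz extension with control on the neighborhoods of the pieces:
given pairwise disjoint nonempty compact sets `K 0, …, K (N-1)` at mutual
distance `δ > 0`, an `L`-Lipschitz function `f` on their union bounded by `M`,
whose restriction to `K ℓ` has least Lipschitz constant `c ℓ`, there is an
extension `g` of `f` to all of `X` which is `2L`-Lipschitz, bounded by `2M`,
and whose restriction to the `δ/10`-neighborhood `U ℓ` of `K ℓ` is
`c ℓ`-Lipschitz. -/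
theorem lipschitz_extension_pieces {X : Type*} [MetricSpace X]
    (N : ℕ) (hN : 2 ≤ N)
    (K : Fin N → Set X)
    (hKne : ∀ ℓ, (K ℓ).Nonempty)
    (hKcompact : ∀ ℓ, IsCompact (K ℓ))
    (hKdisj : ∀ i j : Fin N, i ≠ j → Disjoint (K i) (K j))
    (δ : ℝ)
    (hδdef : δ = sInf {d : ℝ | ∃ i j : Fin N, i < j ∧
      d = sInf (Set.image2 dist (K i) (K j))})
    (hδpos : 0 < δ)
    (L M : ℝ) (hL : 0 ≤ L) (hM : 0 ≤ M)
    (f : X → ℝ)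
    (hfLip : ∀ x ∈ ⋃ ℓ, K ℓ, ∀ y ∈ ⋃ ℓ, K ℓ, |f x - f y| ≤ L * dist x y)
    (hfBdd : ∀ x ∈ ⋃ ℓ, K ℓ, |f x| ≤ M)
    (c : Fin N → ℝ)
    (hc : ∀ ℓ, c ℓ = sInf {L' : ℝ | 0 ≤ L' ∧
      ∀ x ∈ K ℓ, ∀ y ∈ K ℓ, |f x - f y| ≤ L' * dist x y}) :
    ∃ g : X → ℝ,
      (∀ x ∈ ⋃ ℓ, K ℓ, g x = f x) ∧
      (∀ x y : X, |g x - g y| ≤ 2 * L * dist x y) ∧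
      (∀ x : X, |g x| ≤ 2 * M) ∧
      (∀ ℓ : Fin N,
        ∀ x ∈ {z : X | infDist z (K ℓ) < δ / 10},
        ∀ y ∈ {z : X | infDist z (K ℓ) < δ / 10},
          |g x - g y| ≤ c ℓ * dist x y) := by
  classical
  -- the set of Lipschitz constants for `f` on `K ℓ`
  set S : Fin N → Set ℝ := fun ℓ =>
    {L' : ℝ | 0 ≤ L' ∧ ∀ x ∈ K ℓ, ∀ y ∈ K ℓ, |f x - f y| ≤ L' * dist x y} with hS
  have hLmem : ∀ ℓ, L ∈ S ℓ := by
    intro ℓ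
    refine ⟨hL, fun x hx y hy => ?_⟩
    exact hfLip x (Set.mem_iUnion.2 ⟨ℓ, hx⟩) y (Set.mem_iUnion.2 ⟨ℓ, hy⟩)
  have hSbdd : ∀ ℓ, BddBelow (S ℓ) := fun ℓ => ⟨0, fun t ht => ht.1⟩
  have hSclosed : ∀ ℓ, IsClosed (S ℓ) := by
    intro ℓ
    have : S ℓ = Set.Ici (0 : ℝ) ∩
        ⋂ (x) (_ : x ∈ K ℓ) (y) (_ : y ∈ K ℓ),
          {L' : ℝ | |f x - f y| ≤ L' * dist x y} := by
      ext L'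
      simp only [hS, Set.mem_setOf_eq, Set.mem_inter_iff, Set.mem_Ici, Set.mem_iInter]
    rw [this]
    refine isClosed_Ici.inter ?_
    refine isClosed_iInter fun x => isClosed_iInter fun _ =>
      isClosed_iInter fun y => isClosed_iInter fun _ => ?_
    exact isClosed_le continuous_const (continuous_id.mul continuous_const)
  have hcmem : ∀ ℓ, c ℓ ∈ S ℓ := by
    intro ℓ
    rw [hc ℓ]
    exact (hSclosed ℓ).csInf_mem ⟨L, hLmem ℓ⟩ (hSbdd ℓ)
  have hc0 : ∀ ℓ, 0 ≤ c ℓ := fun ℓ => (hcmem ℓ).1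
  have hcLip : ∀ ℓ, ∀ x ∈ K ℓ, ∀ y ∈ K ℓ, |f x - f y| ≤ c ℓ * dist x y :=
    fun ℓ => (hcmem ℓ).2
  have hcL : ∀ ℓ, c ℓ ≤ L := by
    intro ℓ; rw [hc ℓ]; exact csInf_le (hSbdd ℓ) (hLmem ℓ)
  -- δ is ≤ the distance between points of distinct pieces
  have hδab : ∀ i j : Fin N, i ≠ j → ∀ a ∈ K i, ∀ b ∈ K j, δ ≤ dist a b := by
    have key : ∀ i j : Fin N, i < j → ∀ a ∈ K i, ∀ b ∈ K j, δ ≤ dist a b := by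
      intro i j hij a ha b hb
      have hbdd : BddBelow {d : ℝ | ∃ i j : Fin N, i < j ∧
          d = sInf (Set.image2 dist (K i) (K j))} := by
        refine ⟨0, fun t ht => ?_⟩
        obtain ⟨i', j', _, rfl⟩ := ht
        refine le_csInf ?_ ?_
        · obtain ⟨a', ha'⟩ := hKne i'; obtain ⟨b', hb'⟩ := hKne j'
          exact ⟨_, Set.mem_image2_of_mem ha' hb'⟩
        · rintro d ⟨a', _, b', _, rfl⟩; exact dist_nonneg
      have h1 : δ ≤ sInf (Set.image2 dist (K i) (K j)) := by
        rw [hδdef]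
        exact csInf_le hbdd ⟨i, j, hij, rfl⟩
      have h2 : sInf (Set.image2 dist (K i) (K j)) ≤ dist a b := by
        refine csInf_le ⟨0, ?_⟩ (Set.mem_image2_of_mem ha hb)
        rintro d ⟨a', _, b', _, rfl⟩; exact dist_nonneg
      exact h1.trans h2
    intro i j hij a ha b hb
    rcases lt_or_gt_of_ne hij with h | h
    · exact key i j h a ha b hb
    · rw [dist_comm]; exact key j i h b hb a ha
  -- separation of the neighborhoods
  have hsep : ∀ i j : Fin N, i ≠ j → ∀ x, infDist x (K i) < δ / 10 →
      ∀ y, infDist y (K j) < δ / 10 → 4 * δ / 5 ≤ dist x y := by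
    intro i j hij x hx y hy
    obtain ⟨a, ha, hxa⟩ := (infDist_lt_iff (hKne i)).1 hx
    obtain ⟨b, hb, hyb⟩ := (infDist_lt_iff (hKne j)).1 hy
    have h1 : δ ≤ dist a b := hδab i j hij a ha b hb
    have h2 : dist a b ≤ dist a x + dist x y + dist y b := dist_triangle4 a x y b
    rw [dist_comm a x] at h2
    linarith
  -- neighborhoods are pairwise disjoint
  have hUdisj : ∀ i j : Fin N, ∀ x, infDist x (K i) < δ / 10 →
      infDist x (K j) < δ / 10 → i = j := by
    intro i j x hxi hxj
    by_contra hij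
    have := hsep i j hij x hxi x hxj
    rw [dist_self] at this
    linarith
  -- extend `f` from each `K ℓ` with constant `c ℓ`
  have hfLipOn : ∀ ℓ, LipschitzOnWith (Real.toNNReal (c ℓ)) f (K ℓ) := by
    intro ℓ
    rw [lipschitzOnWith_iff_dist_le_mul]
    intro x hx y hy
    rw [Real.dist_eq, Real.coe_toNNReal _ (hc0 ℓ)]
    exact hcLip ℓ x hx y hy
  choose φ hφLip hφEq using fun ℓ => (hfLipOn ℓ).extend_real
  -- clamp each extension to `[-M, M]`
  set φ' : Fin N → X → ℝ := fun ℓ x => max (-M) (min (φ ℓ x) M) with hφ'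
  have hφ'Bdd : ∀ ℓ x, |φ' ℓ x| ≤ M := by
    intro ℓ x
    rw [abs_le]
    exact ⟨neg_le_of_neg_le (neg_le.1 (le_max_left _ _)),
      max_le (by linarith) (min_le_right _ _)⟩
  have hφ'Lip : ∀ ℓ x y, |φ' ℓ x - φ' ℓ y| ≤ c ℓ * dist x y := by
    intro ℓ x y
    refine (clamp_lipschitz (-M) M (φ ℓ x) (φ ℓ y)).trans ?_
    have := (hφLip ℓ).dist_le_mul x y
    rwa [Real.dist_eq, Real.coe_toNNReal _ (hc0 ℓ)] at this
  have hφ'Eq : ∀ ℓ, ∀ x ∈ K ℓ, φ' ℓ x = f x := by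
    intro ℓ x hx
    have hb := abs_le.1 (hfBdd x (Set.mem_iUnion.2 ⟨ℓ, hx⟩))
    rw [hφ']
    simp only
    rw [← hφEq ℓ hx, min_eq_left hb.2, max_eq_right hb.1]
  -- glue on the union of the neighborhoods
  set A : Set X := ⋃ ℓ, {z : X | infDist z (K ℓ) < δ / 10} with hA
  set h : X → ℝ := fun x =>
    if hx : ∃ ℓ, infDist x (K ℓ) < δ / 10 then φ' hx.choose x else 0 with hh
  have hhval : ∀ i : Fin N, ∀ x, infDist x (K i) < δ / 10 → h x = φ' i x := by
    intro i x hxi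
    have hx : ∃ ℓ, infDist x (K ℓ) < δ / 10 := ⟨i, hxi⟩
    rw [hh]
    simp only [dif_pos hx]
    have : hx.choose = i := hUdisj _ _ x hx.choose_spec hxi
    rw [this]
  -- `h` is 2L-Lipschitz on A
  have hhLipOn : LipschitzOnWith (Real.toNNReal (2 * L)) h A := by
    rw [lipschitzOnWith_iff_dist_le_mul]
    intro x hx y hy
    rw [Real.dist_eq, Real.coe_toNNReal _ (by linarith : (0:ℝ) ≤ 2 * L)]
    obtain ⟨i, hxi⟩ := Set.mem_iUnion.1 hx
    obtain ⟨j, hyj⟩ := Set.mem_iUnion.1 hy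
    simp only [Set.mem_setOf_eq] at hxi hyj
    rw [hhval i x hxi, hhval j y hyj]
    by_cases hij : i = j
    · subst hij
      refine (hφ'Lip i x y).trans ?_
      have : c i ≤ 2 * L := (hcL i).trans (by linarith)
      exact mul_le_mul_of_nonneg_right this dist_nonneg
    · obtain ⟨a, ha, hxa⟩ := (infDist_lt_iff (hKne i)).1 hxi
      obtain ⟨b, hb, hyb⟩ := (infDist_lt_iff (hKne j)).1 hyj
      have hd : 4 * δ / 5 ≤ dist x y := hsep i j hij x hxi y hyj
      have t1 : |φ' i x - φ' i a| ≤ c i * dist x a := hφ'Lip i x a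
      have t2 : |f a - f b| ≤ L * dist a b :=
        hfLip a (Set.mem_iUnion.2 ⟨i, ha⟩) b (Set.mem_iUnion.2 ⟨j, hb⟩)
      have t3 : |φ' j b - φ' j y| ≤ c j * dist b y := hφ'Lip j b y
      have hea : φ' i a = f a := hφ'Eq i a ha
      have heb : φ' j b = f b := hφ'Eq j b hb
      have tri : |φ' i x - φ' j y| ≤
          |φ' i x - φ' i a| + |f a - f b| + |φ' j b - φ' j y| := by
        rw [hea, heb] at *
        calc |φ' i x - φ' j y|
            = |(φ' i x - f a) + (f a - f b) + (f b - φ' j y)| := by ring_nf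
          _ ≤ |φ' i x - f a| + |f a - f b| + |f b - φ' j y| := by
              exact (abs_add_le _ _).trans (add_le_add_left (abs_add_le _ _) _)
      have hab : dist a b ≤ dist x y + dist x a + dist b y := by
        have := dist_triangle4 a x y b
        rw [dist_comm a x, dist_comm y b] at this
        linarith
      have hcix : c i * dist x a ≤ L * (δ / 10) := by
        have h1 : c i * dist x a ≤ L * dist x a :=
          mul_le_mul_of_nonneg_right (hcL i) dist_nonneg
        have h2 : L * dist x a ≤ L * (δ / 10) :=
          mul_le_mul_of_nonneg_left (le_of_lt hxa) hL
        linarith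
      have hcjy : c j * dist b y ≤ L * (δ / 10) := by
        have h1 : c j * dist b y ≤ L * dist b y :=
          mul_le_mul_of_nonneg_right (hcL j) dist_nonneg
        have h2 : L * dist b y ≤ L * (δ / 10) := by
          rw [dist_comm b y]
          exact mul_le_mul_of_nonneg_left (le_of_lt hyb) hL
        linarith
      have hmid : L * dist a b ≤ L * (dist x y + δ / 10 + δ / 10) := by
        refine mul_le_mul_of_nonneg_left ?_ hL
        linarith [hab, le_of_lt hxa, le_of_lt hyb, dist_comm b y]
      have hδd : L * (2 * δ / 5) ≤ L * (dist x y / 2) := by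
        refine mul_le_mul_of_nonneg_left ?_ hL
        linarith
      calc |φ' i x - φ' j y|
          ≤ |φ' i x - φ' i a| + |f a - f b| + |φ' j b - φ' j y| := tri
        _ ≤ c i * dist x a + L * dist a b + c j * dist b y := by linarith
        _ ≤ L * (δ / 10) + L * (dist x y + δ / 10 + δ / 10) + L * (δ / 10) := by
            linarith
        _ = L * dist x y + L * (2 * δ / 5) := by ring
        _ ≤ L * dist x y + L * (dist x y / 2) := by linarith
        _ ≤ 2 * L * dist x y := by
            have : 0 ≤ L * dist x y := mul_nonneg hL dist_nonneg
            nlinarith [mul_nonneg hL (dist_nonneg (x := x) (y := y))]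
  -- extend to all of X and clamp to [-2M, 2M]
  obtain ⟨G, hGLip, hGEq⟩ := hhLipOn.extend_real
  refine ⟨fun x => max (-(2 * M)) (min (G x) (2 * M)), ?_, ?_, ?_, ?_⟩
  · -- agrees with f on the union
    intro x hx
    obtain ⟨ℓ, hxℓ⟩ := Set.mem_iUnion.1 hx
    have hxU : infDist x (K ℓ) < δ / 10 := by
      rw [infDist_zero_of_mem hxℓ]; linarith
    have hxA : x ∈ A := Set.mem_iUnion.2 ⟨ℓ, hxU⟩
    show max (-(2 * M)) (min (G x) (2 * M)) = f x
    have : G x = f x := by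
      rw [← hGEq hxA, hhval ℓ x hxU, hφ'Eq ℓ x hxℓ]
    rw [this]
    have hb := abs_le.1 (hfBdd x hx)
    rw [min_eq_left (by linarith), max_eq_right (by linarith)]
  · -- 2L-Lipschitz
    intro x y
    refine (clamp_lipschitz (-(2 * M)) (2 * M) (G x) (G y)).trans ?_
    have := hGLip.dist_le_mul x y
    rwa [Real.dist_eq, Real.coe_toNNReal _ (by linarith : (0:ℝ) ≤ 2 * L)] at this
  · -- bounded by 2M
    intro x
    rw [abs_le]
    exact ⟨neg_le_of_neg_le (neg_le.1 (le_max_left _ _)),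
      max_le (by linarith) (min_le_right _ _)⟩
  · -- c ℓ-Lipschitz on each neighborhood
    intro ℓ x hx y hy
    simp only [Set.mem_setOf_eq] at hx hy
    have hval : ∀ z, infDist z (K ℓ) < δ / 10 →
        max (-(2 * M)) (min (G z) (2 * M)) = φ' ℓ z := by
      intro z hz
      have hzA : z ∈ A := Set.mem_iUnion.2 ⟨ℓ, hz⟩
      have hG : G z = φ' ℓ z := by rw [← hGEq hzA, hhval ℓ z hz]
      rw [hG]
      have hb := abs_le.1 (hφ'Bdd ℓ z)
      rw [min_eq_left (by linarith), max_eq_right (by linarith)]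
    show |max (-(2 * M)) (min (G x) (2 * M)) - max (-(2 * M)) (min (G y) (2 * M))| ≤ _
    rw [hval x hx, hval y hy]
    exact hφ'Lip ℓ x y
end

section
/- Let X be a metric space, let K_1 and K_2 be nonempty compact subsets of X with dist(K_1, K_2) ≥ δ for some δ > 0, and for i = 1, 2 let U_i := {x ∈ X : dist(x, K_i) < δ/10}. Let L ≥ 0 and c_1, c_2 ∈ [0, L], and let g : U_1 ∪ U_2 → ℝ be a function such that for i = 1, 2 the restriction g|_{U_i} is c_i-Lipschitz, and such that the restriction of g to K_1 ∪ K_2 is L-Lipschitz. Then for every x ∈ U_1 and every y ∈ U_2, |g(x) − g(y)| ≤ 2L·d(x,y). -/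
open Metric

/-- Cross-neighborhood Lipschitz bound: if `K₁, K₂` are nonempty compact sets
at distance `≥ δ > 0`, `U_i` is the `δ/10`-neighborhood of `K_i`, and
`g` is `c_i`-Lipschitz on `U_i` (with `0 ≤ c_i ≤ L`) and `L`-Lipschitz on
`K₁ ∪ K₂`, then `|g x − g y| ≤ 2 L d(x,y)` for all `x ∈ U₁`, `y ∈ U₂`. -/
theorem cross_neighborhood_lipschitz {X : Type*} [MetricSpace X]
    (K₁ K₂ : Set X) (hK₁ne : K₁.Nonempty) (hK₂ne : K₂.Nonempty)
    (hK₁c : IsCompact K₁) (hK₂c : IsCompact K₂)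
    (δ : ℝ) (hδ : 0 < δ)
    (hdist : ∀ x ∈ K₁, ∀ y ∈ K₂, δ ≤ dist x y)
    (L c₁ c₂ : ℝ) (hL : 0 ≤ L)
    (hc₁ : c₁ ∈ Set.Icc (0 : ℝ) L) (hc₂ : c₂ ∈ Set.Icc (0 : ℝ) L)
    (g : X → ℝ)
    (hg₁ : ∀ x ∈ {z : X | infDist z K₁ < δ / 10},
           ∀ y ∈ {z : X | infDist z K₁ < δ / 10}, |g x - g y| ≤ c₁ * dist x y)
    (hg₂ : ∀ x ∈ {z : X | infDist z K₂ < δ / 10},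
           ∀ y ∈ {z : X | infDist z K₂ < δ / 10}, |g x - g y| ≤ c₂ * dist x y)
    (hgL : ∀ x ∈ K₁ ∪ K₂, ∀ y ∈ K₁ ∪ K₂, |g x - g y| ≤ L * dist x y) :
    ∀ x ∈ {z : X | infDist z K₁ < δ / 10},
    ∀ y ∈ {z : X | infDist z K₂ < δ / 10},
      |g x - g y| ≤ 2 * L * dist x y := by
  intro x hx y hy
  obtain ⟨x₀, hx₀K, hx₀d⟩ := hK₁c.exists_infDist_eq_dist hK₁ne x
  obtain ⟨y₀, hy₀K, hy₀d⟩ := hK₂c.exists_infDist_eq_dist hK₂ne y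
  have hxx₀ : dist x x₀ < δ / 10 := by rw [← hx₀d]; exact hx
  have hyy₀ : dist y y₀ < δ / 10 := by rw [← hy₀d]; exact hy
  have hx₀U : infDist x₀ K₁ < δ / 10 := by
    rw [infDist_zero_of_mem hx₀K]; linarith
  have hy₀U : infDist y₀ K₂ < δ / 10 := by
    rw [infDist_zero_of_mem hy₀K]; linarith
  have h1 : |g x - g x₀| ≤ c₁ * dist x x₀ := hg₁ x hx x₀ hx₀U
  have h2 : |g x₀ - g y₀| ≤ L * dist x₀ y₀ := hgL x₀ (Or.inl hx₀K) y₀ (Or.inr hy₀K)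
  have h3 : |g y₀ - g y| ≤ c₂ * dist y₀ y := hg₂ y₀ hy₀U y hy
  have hδxy : δ ≤ dist x₀ y₀ := hdist x₀ hx₀K y₀ hy₀K
  have htri : dist x₀ y₀ ≤ dist x₀ x + dist x y + dist y y₀ := dist_triangle4 x₀ x y y₀
  have hfar : 4 * δ / 5 ≤ dist x y := by
    rw [dist_comm x₀ x] at htri; linarith
  have hd1 : c₁ * dist x x₀ ≤ L * (δ / 10) := by
    have := mul_le_mul hc₁.2 hxx₀.le dist_nonneg hL
    linarith
  have hd3 : c₂ * dist y₀ y ≤ L * (δ / 10) := by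
    have he : dist y₀ y = dist y y₀ := dist_comm _ _
    have := mul_le_mul hc₂.2 hyy₀.le dist_nonneg hL
    rw [he]; linarith
  have hd2 : L * dist x₀ y₀ ≤ L * (dist x y + δ / 5) := by
    apply mul_le_mul_of_nonneg_left _ hL
    rw [dist_comm x₀ x] at htri; linarith
  have hsum : |g x - g y| ≤ |g x - g x₀| + |g x₀ - g y₀| + |g y₀ - g y| := by
    have := abs_sub_le (g x) (g x₀) (g y)
    have := abs_sub_le (g x₀) (g y₀) (g y)
    linarith
  have hδd : δ ≤ 5 / 4 * dist x y := by linarith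
  nlinarith [hL, dist_nonneg (x := x) (y := y)]
end
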